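/- Let β > 0 and K > 0 be such that 0 is the unique global minimum point of G_{β,K} on ℝ (equivalently, the set of equilibrium macrostates is {0}). Then S_n/n converges weakly to the point mass δ₀ under P_{n,β,K}: for every ε > 0, P_{n,β,K}(|S_n/n| ≥ ε) → 0 as n → ∞. -/

import Mathlib

open Filter

noncomputable section

/-- The three spin values `-1, 0, 1` of the Blume–Capel model. -/
def spinVal : Fin 3 → ℝ := ![(-1 : ℝ), 0, 1]

/-- Total spin `S_n(ω) = Σ_j ω_j`. -/
def Sn (n : ℕ) (ω : Fin n → Fin 3) : ℝ := ∑ i, spinVal (ω i)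

/-- Blume–Capel Hamiltonian `H_{n,K}(ω) = Σ_j ω_j² − (K/n)(Σ_j ω_j)²`. -/
def Hn (n : ℕ) (K : ℝ) (ω : Fin n → Fin 3) : ℝ :=
  (∑ i, (spinVal (ω i)) ^ 2) - (K / n) * (Sn n ω) ^ 2

/-- Partition function `Z_n(β,K)`. -/
def Zn (n : ℕ) (β K : ℝ) : ℝ := ∑ ω : Fin n → Fin 3, Real.exp (-β * Hn n K ω)

/-- `P_{n,β,K}(S_n/n ∈ A)` for a set `A ⊆ ℝ`. -/
def probBC (n : ℕ) (β K : ℝ) (A : Set ℝ) : ℝ :=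
  (∑ ω : Fin n → Fin 3, A.indicator (fun _ => Real.exp (-β * Hn n K ω)) (Sn n ω / n)) /
    Zn n β K

/-- Cumulant generating function
`c_β(t) = log[(1 + e^{−β}(e^t + e^{−t}))/(1 + 2e^{−β})]`. -/
def cBC (β t : ℝ) : ℝ :=
  Real.log ((1 + Real.exp (-β) * (Real.exp t + Real.exp (-t))) / (1 + 2 * Real.exp (-β)))

/-- Free energy functional `G_{β,K}(z) = βKz² − c_β(2βKz)`. -/
def GBC (β K z : ℝ) : ℝ := β * K * z ^ 2 - cBC β (2 * β * K * z)

/-! ### Auxiliary lemmas -/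

lemma lambda_pos (β : ℝ) : 0 < 1 + 2 * Real.exp (-β) := by positivity

lemma exp_cBC (β t : ℝ) :
    Real.exp (cBC β t)
      = (1 + Real.exp (-β) * (Real.exp t + Real.exp (-t))) / (1 + 2 * Real.exp (-β)) :=
  Real.exp_log (by positivity)

lemma single_sum (β t : ℝ) :
    ∑ a : Fin 3, Real.exp (t * spinVal a - β * (spinVal a) ^ 2)
      = (1 + 2 * Real.exp (-β)) * Real.exp (cBC β t) := by
  rw [exp_cBC, mul_div_cancel₀ _ (ne_of_gt (lambda_pos β)), Fin.sum_univ_three]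
  simp only [spinVal, Matrix.cons_val_zero, Matrix.cons_val_one, Matrix.head_cons,
    Matrix.cons_val_two, Matrix.tail_cons]
  have e1 : t * -1 - β * (-1:ℝ) ^ 2 = -t + -β := by ring
  have e2 : t * 0 - β * (0:ℝ) ^ 2 = 0 := by ring
  have e3 : t * 1 - β * (1:ℝ) ^ 2 = t + -β := by ring
  rw [e1, e2, e3, Real.exp_zero, Real.exp_add, Real.exp_add]
  ring

lemma chernoff (β t : ℝ) (n : ℕ) :
    ∑ ω : Fin n → Fin 3, Real.exp (∑ i, (t * spinVal (ω i) - β * (spinVal (ω i)) ^ 2))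
      = ((1 + 2 * Real.exp (-β)) * Real.exp (cBC β t)) ^ n := by
  rw [← single_sum β t, Fintype.sum_pow]
  exact Finset.sum_congr rfl fun ω _ => Real.exp_sum _ _

lemma cBC_zero (β : ℝ) : cBC β 0 = 0 := by
  have h : (1 + Real.exp (-β) * (Real.exp 0 + Real.exp (-0)))
      = 1 + 2 * Real.exp (-β) := by simp [Real.exp_zero]; ring
  rw [cBC, h, div_self (ne_of_gt (lambda_pos β)), Real.log_one]

lemma exp_decomp (n : ℕ) (β K t x : ℝ) (ω : Fin n → Fin 3) (hx : Sn n ω = x) :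
    -β * Hn n K ω
      = (∑ i, (t * spinVal (ω i) - β * (spinVal (ω i)) ^ 2)) + (β * (K / n) * x ^ 2 - t * x) := by
  have hs : ∑ i, t * spinVal (ω i) = t * x := by rw [← hx, Sn, Finset.mul_sum]
  rw [Finset.sum_sub_distrib, hs, ← Finset.mul_sum]
  unfold Hn
  rw [hx]
  ring

lemma Zn_ge (n : ℕ) (β K : ℝ) (hβ : 0 < β) (hK : 0 < K) :
    (1 + 2 * Real.exp (-β)) ^ n ≤ Zn n β K := by
  have h := chernoff β 0 n
  rw [cBC_zero, Real.exp_zero, mul_one] at h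
  rw [← h, Zn]
  apply Finset.sum_le_sum
  intro ω _
  apply Real.exp_le_exp.mpr
  rw [exp_decomp n β K 0 (Sn n ω) ω rfl]
  have hK' : (0:ℝ) ≤ K / n := by positivity
  nlinarith [sq_nonneg (Sn n ω), hβ.le, mul_nonneg (mul_nonneg hβ.le hK') (sq_nonneg (Sn n ω))]

lemma fiber_bound (β K ε δ : ℝ) (hβ : 0 < β) (hK : 0 < K)
    (hδ : ∀ z : ℝ, ε ≤ |z| → |z| ≤ 1 → δ ≤ GBC β K z)
    (n : ℕ) (hn : 1 ≤ n) (x : ℝ) (hxn : |x| ≤ n) :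
    ∑ ω ∈ Finset.univ.filter (fun ω : Fin n → Fin 3 => Sn n ω = x),
        Set.indicator {y : ℝ | ε ≤ |y|} (fun _ => Real.exp (-β * Hn n K ω)) (Sn n ω / n)
      ≤ (1 + 2 * Real.exp (-β)) ^ n * Real.exp (-(n * δ)) := by
  have hn0 : (0:ℝ) < n := by exact_mod_cast hn
  by_cases hz : ε ≤ |x / n|
  · set t : ℝ := 2 * β * K * (x / n) with ht
    set C : ℝ := β * (K / n) * x ^ 2 - t * x with hC
    have hzle : |x / n| ≤ 1 := by
      rw [abs_div, abs_of_pos hn0, div_le_one hn0]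
      exact hxn
    have hG : δ ≤ GBC β K (x / n) := hδ _ hz hzle
    have hexp : (n : ℝ) * cBC β t + C = -((n : ℝ) * GBC β K (x / n)) := by
      rw [GBC, hC, ht]
      field_simp
      ring
    calc
      ∑ ω ∈ Finset.univ.filter (fun ω : Fin n → Fin 3 => Sn n ω = x),
          Set.indicator {y : ℝ | ε ≤ |y|} (fun _ => Real.exp (-β * Hn n K ω)) (Sn n ω / n)
        = ∑ ω ∈ Finset.univ.filter (fun ω : Fin n → Fin 3 => Sn n ω = x),
            Real.exp (∑ i, (t * spinVal (ω i) - β * (spinVal (ω i)) ^ 2)) * Real.exp C := by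
          apply Finset.sum_congr rfl
          intro ω hω
          have hx : Sn n ω = x := (Finset.mem_filter.mp hω).2
          rw [Set.indicator_of_mem (by rw [Set.mem_setOf_eq, hx]; exact hz),
            exp_decomp n β K t x ω hx, Real.exp_add]
      _ ≤ ∑ ω : Fin n → Fin 3,
            Real.exp (∑ i, (t * spinVal (ω i) - β * (spinVal (ω i)) ^ 2)) * Real.exp C := by
          apply Finset.sum_le_sum_of_subset_of_nonneg (Finset.filter_subset _ _)
          intro ω _ _
          positivity
      _ = ((1 + 2 * Real.exp (-β)) * Real.exp (cBC β t)) ^ n * Real.exp C := by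
          rw [← Finset.sum_mul, chernoff]
      _ = (1 + 2 * Real.exp (-β)) ^ n * Real.exp ((n : ℝ) * cBC β t + C) := by
          rw [mul_pow, ← Real.exp_nat_mul, mul_assoc, ← Real.exp_add]
      _ ≤ (1 + 2 * Real.exp (-β)) ^ n * Real.exp (-(n * δ)) := by
          apply mul_le_mul_of_nonneg_left _ (by positivity)
          apply Real.exp_le_exp.mpr
          rw [hexp]
          exact neg_le_neg (mul_le_mul_of_nonneg_left hG hn0.le)
  · have : ∀ ω ∈ Finset.univ.filter (fun ω : Fin n → Fin 3 => Sn n ω = x),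
        Set.indicator {y : ℝ | ε ≤ |y|} (fun _ => Real.exp (-β * Hn n K ω)) (Sn n ω / n) = 0 := by
      intro ω hω
      have hx : Sn n ω = x := (Finset.mem_filter.mp hω).2
      apply Set.indicator_of_notMem
      rw [Set.mem_setOf_eq, hx]
      exact hz
    rw [Finset.sum_congr rfl this, Finset.sum_const, smul_zero]
    positivity

/-- The integer total spin and the bound `|k| ≤ n`. -/
lemma Sn_mem_image (n : ℕ) (ω : Fin n → Fin 3) :
    Sn n ω ∈ (Finset.Icc (-(n:ℤ)) n).image (fun k : ℤ => (k : ℝ)) := by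
  classical
  set sv : Fin 3 → ℤ := ![(-1 : ℤ), 0, 1] with hsv
  have hcast : ∀ a : Fin 3, ((sv a : ℤ) : ℝ) = spinVal a := by
    intro a
    fin_cases a <;> simp [hsv, spinVal]
  set k : ℤ := ∑ i, sv (ω i) with hk
  have hSk : Sn n ω = (k : ℝ) := by
    rw [Sn, hk]
    push_cast
    exact (Finset.sum_congr rfl fun i _ => (hcast (ω i)).symm)
  have habs : |k| ≤ (n : ℤ) := by
    calc |k| ≤ ∑ i : Fin n, |sv (ω i)| := Finset.abs_sum_le_sum_abs _ _
      _ ≤ ∑ _i : Fin n, 1 := Finset.sum_le_sum fun i _ => by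
          have : ∀ a : Fin 3, |sv a| ≤ 1 := by decide
          exact this (ω i)
      _ = n := by simp
  exact Finset.mem_image.mpr ⟨k, Finset.mem_Icc.mpr (abs_le.mp habs), hSk.symm⟩

lemma prob_le (β K ε δ : ℝ) (hβ : 0 < β) (hK : 0 < K)
    (hδ : ∀ z : ℝ, ε ≤ |z| → |z| ≤ 1 → δ ≤ GBC β K z)
    (n : ℕ) (hn : 1 ≤ n) :
    probBC n β K {x : ℝ | ε ≤ |x|} ≤ (2 * n + 1) * Real.exp (-(n * δ)) := by
  classical
  have hΛ := lambda_pos β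
  have hΛn : (0:ℝ) < (1 + 2 * Real.exp (-β)) ^ n := pow_pos hΛ n
  have hZ : (0:ℝ) < Zn n β K := lt_of_lt_of_le hΛn (Zn_ge n β K hβ hK)
  set T : Finset ℝ := (Finset.Icc (-(n:ℤ)) n).image (fun k : ℤ => (k : ℝ)) with hT
  set B : ℝ := (1 + 2 * Real.exp (-β)) ^ n * Real.exp (-(n * δ)) with hB
  have hBnn : 0 ≤ B := by positivity
  have hcard : (T.card : ℝ) ≤ 2 * n + 1 := by
    have h1 : T.card ≤ (Finset.Icc (-(n:ℤ)) n).card := Finset.card_image_le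
    have h2 : (Finset.Icc (-(n:ℤ)) n).card = 2 * n + 1 := by
      rw [Int.card_Icc]
      omega
    rw [h2] at h1
    exact_mod_cast h1
  have hnum : (∑ ω : Fin n → Fin 3,
      Set.indicator {x : ℝ | ε ≤ |x|} (fun _ => Real.exp (-β * Hn n K ω)) (Sn n ω / n))
      ≤ (2 * n + 1) * B := by
    rw [← Finset.sum_fiberwise_of_maps_to (fun ω _ => Sn_mem_image n ω)]
    calc
      ∑ x ∈ T, ∑ ω ∈ Finset.univ.filter (fun ω : Fin n → Fin 3 => Sn n ω = x),
          Set.indicator {y : ℝ | ε ≤ |y|} (fun _ => Real.exp (-β * Hn n K ω)) (Sn n ω / n)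
        ≤ ∑ _x ∈ T, B := by
          apply Finset.sum_le_sum
          intro x hx
          obtain ⟨k, hk, rfl⟩ := Finset.mem_image.mp hx
          have hkn : |(k:ℝ)| ≤ (n:ℝ) := by
            have := Finset.mem_Icc.mp hk
            rw [← Int.cast_abs]
            exact_mod_cast abs_le.mpr this
          exact fiber_bound β K ε δ hβ hK hδ n hn _ hkn
      _ = (T.card : ℝ) * B := by rw [Finset.sum_const, nsmul_eq_mul]
      _ ≤ (2 * n + 1) * B := mul_le_mul_of_nonneg_right hcard hBnn
  rw [probBC]
  calc
    (∑ ω : Fin n → Fin 3,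
        Set.indicator {x : ℝ | ε ≤ |x|} (fun _ => Real.exp (-β * Hn n K ω)) (Sn n ω / n)) /
      Zn n β K
      ≤ ((2 * n + 1) * B) / ((1 + 2 * Real.exp (-β)) ^ n) := by
        apply div_le_div₀ (by positivity) hnum hΛn (Zn_ge n β K hβ hK)
    _ = (2 * n + 1) * Real.exp (-(n * δ)) := by
        rw [hB]
        field_simp

lemma GBC_continuous (β K : ℝ) : Continuous (GBC β K) := by
  unfold GBC cBC
  apply Continuous.sub
  · fun_prop
  · apply Continuous.log
    · fun_prop
    · intro x
      positivity

lemma GBC_zero (β K : ℝ) : GBC β K 0 = 0 := by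
  rw [GBC, mul_zero, cBC_zero]
  ring

/-- **Weak convergence of the magnetization to `δ₀`** (part (a) of Theorem 6.5 of
Ellis–Otto–Touchette).  If `0` is the unique global minimum point of `G_{β,K}`
(equivalently, the set of equilibrium macrostates is `{0}`), then
`P_{n,β,K}(|S_n/n| ≥ ε) → 0` as `n → ∞` for every `ε > 0`. -/
theorem blume_capel_weak_convergence (β K : ℝ) (hβ : 0 < β) (hK : 0 < K)
    (hmin : {z : ℝ | ∀ w : ℝ, GBC β K z ≤ GBC β K w} = {0}) :
    ∀ ε : ℝ, 0 < ε →
      Tendsto (fun n : ℕ => probBC n β K {x : ℝ | ε ≤ |x|}) atTop (nhds 0) := by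
  intro ε hε
  set ε' : ℝ := min ε 1 with hε'
  have hε'0 : 0 < ε' := lt_min hε one_pos
  have hε'1 : ε' ≤ 1 := min_le_right _ _
  have hε'ε : ε' ≤ ε := min_le_left _ _
  -- compact set away from 0
  set A : Set ℝ := Set.Icc (-1 : ℝ) (-ε') ∪ Set.Icc ε' 1 with hA
  have hAcomp : IsCompact A := isCompact_Icc.union isCompact_Icc
  have hAne : A.Nonempty := ⟨1, Or.inr ⟨hε'1, le_refl 1⟩⟩
  obtain ⟨z₀, hz₀A, hz₀min⟩ :=
    hAcomp.exists_isMinOn hAne (GBC_continuous β K).continuousOn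
  have hz₀ne : z₀ ≠ 0 := by
    rcases hz₀A with h | h
    · exact ne_of_lt (lt_of_le_of_lt h.2 (by linarith))
    · exact ne_of_gt (lt_of_lt_of_le hε'0 h.1)
  have h0min : ∀ w : ℝ, GBC β K 0 ≤ GBC β K w := by
    have : (0:ℝ) ∈ {z : ℝ | ∀ w : ℝ, GBC β K z ≤ GBC β K w} := by
      rw [hmin]; rfl
    exact this
  have hz₀notmin : ¬ ∀ w : ℝ, GBC β K z₀ ≤ GBC β K w := by
    intro h
    have : z₀ ∈ {z : ℝ | ∀ w : ℝ, GBC β K z ≤ GBC β K w} := h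
    rw [hmin] at this
    exact hz₀ne this
  push_neg at hz₀notmin
  obtain ⟨w, hw⟩ := hz₀notmin
  set δ : ℝ := GBC β K z₀ with hδdef
  have hδpos : 0 < δ := by
    have h1 : GBC β K 0 ≤ GBC β K w := h0min w
    rw [GBC_zero] at h1
    linarith
  have hδ : ∀ z : ℝ, ε' ≤ |z| → |z| ≤ 1 → δ ≤ GBC β K z := by
    intro z h1 h2
    apply hz₀min
    rcases le_or_gt 0 z with hz | hz
    · right
      rw [abs_of_nonneg hz] at h1 h2
      exact ⟨h1, h2⟩
    · left
      rw [abs_of_neg hz] at h1 h2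
      constructor <;> linarith
  -- squeeze
  have hbound : ∀ᶠ n : ℕ in atTop,
      probBC n β K {x : ℝ | ε ≤ |x|} ≤ (2 * n + 1) * Real.exp (-(n * δ)) := by
    filter_upwards [eventually_ge_atTop 1] with n hn
    have hmono : probBC n β K {x : ℝ | ε ≤ |x|} ≤ probBC n β K {x : ℝ | ε' ≤ |x|} := by
      have hZ : (0:ℝ) < Zn n β K :=
        lt_of_lt_of_le (pow_pos (lambda_pos β) n) (Zn_ge n β K hβ hK)
      apply div_le_div_of_nonneg_right _ hZ.le
      apply Finset.sum_le_sum
      intro ω _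
      apply Set.indicator_le_indicator_of_subset
      · intro y hy
        exact le_trans hε'ε hy
      · intro y
        positivity
    exact le_trans hmono (prob_le β K ε' δ hβ hK hδ n hn)
  have hnonneg : ∀ᶠ n : ℕ in atTop, 0 ≤ probBC n β K {x : ℝ | ε ≤ |x|} := by
    filter_upwards with n
    apply div_nonneg
    · apply Finset.sum_nonneg
      intro ω _
      apply Set.indicator_nonneg
      intro y _
      positivity
    · exact le_trans (pow_pos (lambda_pos β) n).le (Zn_ge n β K hβ hK)
  have htends : Tendsto (fun n : ℕ => ((2 * n + 1 : ℝ)) * Real.exp (-(n * δ)))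
      atTop (nhds 0) := by
    have hr0 : (0:ℝ) ≤ Real.exp (-δ) := (Real.exp_pos _).le
    have hr1 : Real.exp (-δ) < 1 := Real.exp_lt_one_iff.mpr (by linarith)
    have h1 : Tendsto (fun n : ℕ => (n : ℝ) * Real.exp (-δ) ^ n) atTop (nhds 0) :=
      tendsto_self_mul_const_pow_of_lt_one hr0 hr1
    have h2 : Tendsto (fun n : ℕ => Real.exp (-δ) ^ n) atTop (nhds 0) :=
      tendsto_pow_atTop_nhds_zero_of_lt_one hr0 hr1
    have h3 : Tendsto (fun n : ℕ => 2 * ((n : ℝ) * Real.exp (-δ) ^ n) + Real.exp (-δ) ^ n)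
        atTop (nhds (2 * 0 + 0)) := ((h1.const_mul 2).add h2)
    simp only [mul_zero, add_zero] at h3
    apply h3.congr
    intro n
    rw [← Real.exp_nat_mul]
    ring_nf
  exact squeeze_zero' hnonneg hbound htends

end
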